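/- Let n ≥ 3 be odd and let d_0, ..., d_{n-2} ∈ ℝ. Let Γ ⊆ E(1) be the subgroup generated by D_0 = (1, d_0), D_1 = (-1, d_1), ..., D_{n-2} = (-1, d_{n-2}). Then there exists a surjective group homomorphism Φ : F(n-1, 2n) → Γ with Φ(a_i) = D_i for i = 0, ..., n-2. -/

import Mathlib

@[ext] structure E1 where
  ε : ℝˣ
  d : ℝ

namespace E1

instance : Mul E1 := ⟨fun a b => ⟨a.ε * b.ε, (a.ε : ℝ) * b.d + a.d⟩⟩
instance : One E1 := ⟨⟨1, 0⟩⟩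
instance : Inv E1 := ⟨fun a => ⟨a.ε⁻¹, -(((a.ε⁻¹ : ℝˣ) : ℝ) * a.d)⟩⟩

@[simp] lemma mul_def (a b : E1) : a * b = ⟨a.ε * b.ε, (a.ε : ℝ) * b.d + a.d⟩ := rfl
@[simp] lemma one_def : (1 : E1) = ⟨1, 0⟩ := rfl
@[simp] lemma inv_def (a : E1) : a⁻¹ = ⟨a.ε⁻¹, -(((a.ε⁻¹ : ℝˣ) : ℝ) * a.d)⟩ := rfl

instance : Group E1 where
  mul_assoc a b c := by ext <;> simp [mul_assoc] <;> ring
  one_mul a := by ext <;> simp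
  mul_one a := by ext <;> simp
  inv_mul_cancel a := by ext <;> simp

end E1

/-- The Fibonacci relation `a_i a_{i+1} ⋯ a_{i+r-1} = a_{i+r}` (indices mod `m`),
written as a relator in the free group on `ZMod m`. -/
def fibonacciRelation (r m : ℕ) (i : ZMod m) : FreeGroup (ZMod m) :=
  ((List.range r).map (fun j => FreeGroup.of (i + (j : ZMod m)))).prod *
    (FreeGroup.of (i + (r : ZMod m)))⁻¹

/-- The Fibonacci group `F(r, m) = ⟨a_0, …, a_{m-1} ∣ a_i a_{i+1} ⋯ a_{i+r-1} = a_{i+r}⟩`. -/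
abbrev FibonacciGroup (r m : ℕ) : Type :=
  PresentedGroup (Set.range (fibonacciRelation r m))


namespace FibAux

def epsHom : E1 →* ℝˣ := { toFun := E1.ε, map_one' := rfl, map_mul' := fun _ _ => rfl }

@[simp] lemma epsHom_apply (a : E1) : epsHom a = a.ε := rfl

lemma sq_eq_one {a : E1} (h : a.ε = -1) : a * a = 1 := by
  ext
  · simp [h]
  · simp [h]

variable (n : ℕ) (d : ℕ → ℝ)

def G1 (j : ℕ) : E1 := if j = 0 then ⟨1, d 0⟩ else ⟨-1, d j⟩

def P : E1 := ((List.range (n - 1)).map (G1 d)).prod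

def F (j : ℕ) : E1 :=
  if j = 0 then ⟨1, d 0⟩
  else if j ≤ n - 2 then ⟨-1, d j⟩
  else if j = n - 1 then P n d
  else if j = n then ⟨1, -(d 0)⟩
  else if j = n + 1 then ⟨-1, 2 * d 0 + d 1⟩
  else if j ≤ 2 * n - 2 then ⟨-1, d (j - n)⟩
  else P n d

variable {n}

lemma F_zero : F n d 0 = ⟨1, d 0⟩ := by simp [F]

lemma F_mid {j : ℕ} (h1 : 1 ≤ j) (h2 : j ≤ n - 2) : F n d j = ⟨-1, d j⟩ := by
  unfold F; split_ifs <;> first | rfl | omega | exact (‹False›).elim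

lemma F_pred (hn : 3 ≤ n) : F n d (n - 1) = P n d := by
  unfold F; split_ifs <;> first | rfl | omega | exact (‹False›).elim

lemma F_n (hn : 3 ≤ n) : F n d n = ⟨1, -(d 0)⟩ := by
  unfold F; split_ifs <;> first | rfl | omega | exact (‹False›).elim

lemma F_succ (hn : 3 ≤ n) : F n d (n + 1) = ⟨-1, 2 * d 0 + d 1⟩ := by
  unfold F; split_ifs <;> first | rfl | omega | exact (‹False›).elim

lemma F_high {j : ℕ} (hn : 3 ≤ n) (h1 : n + 2 ≤ j) (h2 : j ≤ 2 * n - 2) :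
    F n d j = ⟨-1, d (j - n)⟩ := by
  unfold F; split_ifs <;> first | rfl | omega | exact (‹False›).elim

lemma F_last (hn : 3 ≤ n) : F n d (2 * n - 1) = P n d := by
  unfold F; split_ifs <;> first | rfl | omega | exact (‹False›).elim

lemma pow_aux : ∀ k : ℕ,
    ((List.range (k + 1)).map (fun j => if j = 0 then (1 : ℝˣ) else -1)).prod = (-1) ^ k := by
  intro k
  induction k with
  | zero => simp [List.range_succ]
  | succ k ih =>
      rw [List.range_succ, List.map_append, List.prod_append, ih]
      simp [pow_succ]

lemma eps_P (hn : 3 ≤ n) (hodd : Odd n) : (P n d).ε = -1 := by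
  have h1 : (P n d).ε = epsHom (P n d) := rfl
  rw [h1, P, map_list_prod, List.map_map]
  have h2 : (epsHom ∘ G1 d) = fun j => if j = 0 then (1 : ℝˣ) else -1 := by
    funext j
    by_cases h : j = 0 <;> simp [G1, h]
  rw [h2]
  obtain ⟨m, hm⟩ := hodd
  have hn1 : n - 1 = (n - 2) + 1 := by omega
  rw [hn1, pow_aux]
  have : Odd (n - 2) := ⟨m - 1, by omega⟩
  exact this.neg_one_pow

lemma eps_F (hn : 3 ≤ n) (hodd : Odd n) {j : ℕ} (h0 : j ≠ 0) (hne : j ≠ n) (hj : j < 2 * n) :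
    (F n d j).ε = -1 := by
  unfold F
  split_ifs <;> first | rfl | omega | exact (‹False›).elim | exact eps_P d hn hodd


lemma keyB (hn : 3 ≤ n) (hodd : Odd n) (j : ℕ) (hj : j < 2 * n) :
    F n d j * F n d ((j + n) % (2 * n)) =
      F n d ((j + (n - 1)) % (2 * n)) * F n d ((j + (n - 1)) % (2 * n)) := by
  have modlt : ∀ a : ℕ, a < 2 * n → a % (2 * n) = a := fun a h => Nat.mod_eq_of_lt h
  have modsub : ∀ a : ℕ, 2 * n ≤ a → a < 4 * n → a % (2 * n) = a - 2 * n := fun a h1 h2 => by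
    rw [Nat.mod_eq_sub_mod h1, Nat.mod_eq_of_lt (by omega)]
  by_cases h0 : j = 0
  · subst h0
    rw [zero_add, zero_add, modlt n (by omega), modlt (n - 1) (by omega),
      F_zero, F_n d hn, F_pred d hn, sq_eq_one (eps_P d hn hodd)]
    ext <;> simp
  by_cases h1 : j = 1
  · subst h1
    have e1 : 1 + (n - 1) = n := by omega
    rw [e1, modlt (1 + n) (by omega), modlt n (by omega), F_mid d le_rfl (by omega),
      Nat.add_comm 1 n, F_succ d hn, F_n d hn]
    ext <;> (simp; try ring)
  by_cases hmid : j ≤ n - 2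
  · rw [modlt (j + n) (by omega), modlt (j + (n - 1)) (by omega),
      F_mid d (by omega) hmid,
      sq_eq_one (eps_F d hn hodd (j := j + (n - 1)) (by omega) (by omega) (by omega))]
    have e2 : j + n - n = j := by omega
    rw [F_high d hn (by omega) (by omega), e2]
    exact sq_eq_one rfl
  by_cases hp : j = n - 1
  · subst hp
    have e3 : n - 1 + n = 2 * n - 1 := by omega
    rw [e3, modlt (2 * n - 1) (by omega), modlt (n - 1 + (n - 1)) (by omega),
      F_pred d hn, F_last d hn, sq_eq_one (eps_P d hn hodd),
      sq_eq_one (eps_F d hn hodd (j := n - 1 + (n - 1)) (by omega) (by omega) (by omega))]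
  by_cases hn' : j = n
  · rw [hn']
    have e4 : n + n = 2 * n := by ring
    have e5 : n + (n - 1) = 2 * n - 1 := by omega
    rw [e4, e5, Nat.mod_self, modlt (2 * n - 1) (by omega), F_n d hn, F_zero,
      F_last d hn, sq_eq_one (eps_P d hn hodd)]
    ext <;> simp
  by_cases hs : j = n + 1
  · subst hs
    have e6 : (n + 1 + n) % (2 * n) = 1 := by
      rw [modsub _ (by omega) (by omega)]; omega
    have e7 : (n + 1 + (n - 1)) % (2 * n) = 0 := by
      have : n + 1 + (n - 1) = 2 * n := by omega
      rw [this, Nat.mod_self]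
    rw [e6, e7, F_succ d hn, F_mid d le_rfl (by omega), F_zero]
    ext <;> (simp; try ring)
  by_cases hh : j ≤ 2 * n - 2
  · have e8 : (j + n) % (2 * n) = j - n := by rw [modsub _ (by omega) (by omega)]; omega
    have e9 : (j + (n - 1)) % (2 * n) = j - n - 1 := by
      rw [modsub _ (by omega) (by omega)]; omega
    rw [e8, e9, F_high d hn (by omega) hh, F_mid d (by omega) (by omega),
      sq_eq_one (eps_F d hn hodd (j := j - n - 1) (by omega) (by omega) (by omega))]
    exact sq_eq_one rfl
  · have hj' : j = 2 * n - 1 := by omega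
    subst hj'
    have e10 : (2 * n - 1 + n) % (2 * n) = n - 1 := by
      rw [modsub _ (by omega) (by omega)]; omega
    have e11 : (2 * n - 1 + (n - 1)) % (2 * n) = n - 2 := by
      rw [modsub _ (by omega) (by omega)]; omega
    rw [e10, e11, F_last d hn, F_pred d hn, sq_eq_one (eps_P d hn hodd),
      sq_eq_one (eps_F d hn hodd (j := n - 2) (by omega) (by omega) (by omega))]

lemma key (hn : 3 ≤ n) (hodd : Odd n) : ∀ k : ℕ,
    ((List.range (n - 1)).map (fun j => F n d ((k + j) % (2 * n)))).prod
      = F n d ((k + (n - 1)) % (2 * n)) := by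
  intro k
  induction k with
  | zero =>
    have h1 : ∀ j ∈ List.range (n - 1), F n d ((0 + j) % (2 * n)) = G1 d j := by
      intro j hj
      rw [List.mem_range] at hj
      rw [zero_add, Nat.mod_eq_of_lt (by omega)]
      by_cases h : j = 0
      · subst h; rw [F_zero]; simp [G1]
      · rw [F_mid d (by omega) (by omega)]; simp [G1, h]
    rw [List.map_congr_left h1, zero_add, Nat.mod_eq_of_lt (by omega), F_pred d hn]
    rfl
  | succ k ih =>
    have hE : F n d (k % (2 * n)) *
        ((List.range (n - 1)).map (fun j => F n d ((k + 1 + j) % (2 * n)))).prod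
        = ((List.range (n - 1)).map (fun j => F n d ((k + j) % (2 * n)))).prod *
          F n d ((k + (n - 1)) % (2 * n)) := by
      have hL : ((List.range (n - 1 + 1)).map (fun j => F n d ((k + j) % (2 * n)))).prod
          = F n d (k % (2 * n)) *
            ((List.range (n - 1)).map (fun j => F n d ((k + 1 + j) % (2 * n)))).prod := by
        have hmap : (List.range (n - 1)).map
              ((fun j => F n d ((k + j) % (2 * n))) ∘ Nat.succ)
            = (List.range (n - 1)).map (fun j => F n d ((k + 1 + j) % (2 * n))) := by
          apply List.map_congr_left
          intro j _
          simp only [Function.comp_apply, Nat.succ_eq_add_one]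
          have e : k + (j + 1) = k + 1 + j := by omega
          rw [e]
        rw [List.range_succ_eq_map, List.map_cons, List.prod_cons, List.map_map, hmap,
          Nat.add_zero]
      have hR : ((List.range (n - 1 + 1)).map (fun j => F n d ((k + j) % (2 * n)))).prod
          = ((List.range (n - 1)).map (fun j => F n d ((k + j) % (2 * n)))).prod *
            F n d ((k + (n - 1)) % (2 * n)) := by
        rw [List.range_succ, List.map_append, List.prod_append, List.map_singleton,
          List.prod_singleton]
      rw [← hL, hR]
    rw [ih] at hE
    have hb := keyB d hn hodd (k % (2 * n)) (Nat.mod_lt _ (by omega))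
    rw [Nat.mod_add_mod, Nat.mod_add_mod] at hb
    have hc : F n d (k % (2 * n)) *
        ((List.range (n - 1)).map (fun j => F n d ((k + 1 + j) % (2 * n)))).prod
        = F n d (k % (2 * n)) * F n d ((k + n) % (2 * n)) := by
      rw [hE, ← hb]
    have := mul_left_cancel hc
    rw [this]
    have e : k + 1 + (n - 1) = k + n := by omega
    rw [e]

end FibAux

/-- For odd `n ≥ 3` and reals `d 0, …, d (n-2)`, with `D 0 = (1, d 0)` and
`D i = (-1, d i)` for `1 ≤ i ≤ n-2` in `E(1)`, there is a homomorphism from the Fibonacci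
group `F(n-1, 2n)` sending `a i` to `D i`, surjective onto the subgroup generated by the
`D i`. -/
theorem exists_epi_onto_one_dim_cryst (n : ℕ) (hn : 3 ≤ n) (hodd : Odd n) (d : ℕ → ℝ)
    (D : ℕ → E1)
    (hD0 : D 0 = ⟨1, d 0⟩)
    (hDi : ∀ i : ℕ, 1 ≤ i → i ≤ n - 2 → D i = ⟨-1, d i⟩) :
    ∃ Φ : FibonacciGroup (n - 1) (2 * n) →* E1,
      (∀ i : ℕ, i ≤ n - 2 → Φ (PresentedGroup.of ((i : ZMod (2 * n)))) = D i) ∧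
      Φ.range = Subgroup.closure {x : E1 | ∃ i : ℕ, i ≤ n - 2 ∧ D i = x} := by
  haveI : NeZero (2 * n) := ⟨by omega⟩
  set f : ZMod (2 * n) → E1 := fun x => FibAux.F n d x.val with hf
  have hval : ∀ (x : ZMod (2 * n)) (j : ℕ),
      f (x + (j : ZMod (2 * n))) = FibAux.F n d ((x.val + j) % (2 * n)) := by
    intro x j
    show FibAux.F n d (x + (j : ZMod (2 * n))).val = _
    rw [ZMod.val_add, ZMod.val_natCast, Nat.add_mod_mod]
  have hrel : ∀ r ∈ Set.range (fibonacciRelation (n - 1) (2 * n)),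
      FreeGroup.lift f r = 1 := by
    rintro _ ⟨i, rfl⟩
    unfold fibonacciRelation
    rw [map_mul, map_inv, map_list_prod, List.map_map, mul_inv_eq_one]
    simp only [List.pure_def, List.bind_eq_flatMap]
    rw [← List.map_eq_flatMap (f := (Nat.cast : ℕ → ZMod (2 * n))) (l := List.range (n - 1)), List.map_map]
    have h1 : (List.range (n - 1)).map
          (((FreeGroup.lift f) ∘ fun j => FreeGroup.of (i + j)) ∘ fun a : ℕ => (a : ZMod (2 * n)))
        = (List.range (n - 1)).map (fun j => FibAux.F n d ((i.val + j) % (2 * n))) := by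
      apply List.map_congr_left
      intro j _
      show FreeGroup.lift f (FreeGroup.of (i + (j : ZMod (2 * n)))) = _
      rw [FreeGroup.lift_apply_of, hval]
    rw [h1, FibAux.key d hn hodd i.val]
    show _ = FreeGroup.lift f (FreeGroup.of (i + ((n - 1 : ℕ) : ZMod (2 * n))))
    rw [FreeGroup.lift_apply_of, hval]
  have hDf : ∀ i : ℕ, i ≤ n - 2 → FibAux.F n d i = D i := by
    intro i hi
    by_cases h : i = 0
    · subst h; rw [FibAux.F_zero, hD0]
    · rw [FibAux.F_mid d (by omega) hi, hDi i (by omega) hi]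
  have part1 : ∀ i : ℕ, i ≤ n - 2 →
      PresentedGroup.toGroup hrel (PresentedGroup.of ((i : ZMod (2 * n)))) = D i := by
    intro i hi
    rw [PresentedGroup.toGroup.of]
    show FibAux.F n d ((i : ZMod (2 * n)).val) = D i
    rw [ZMod.val_natCast, Nat.mod_eq_of_lt (by omega), hDf i hi]
  refine ⟨PresentedGroup.toGroup hrel, part1, ?_⟩
  set S : Set E1 := {x : E1 | ∃ i : ℕ, i ≤ n - 2 ∧ D i = x} with hS
  have hP : FibAux.P n d ∈ Subgroup.closure S := by
    apply Subgroup.list_prod_mem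
    intro x hx
    rw [List.mem_map] at hx
    obtain ⟨j, hj, rfl⟩ := hx
    rw [List.mem_range] at hj
    apply Subgroup.subset_closure
    have hg : FibAux.G1 d j = FibAux.F n d j := by
      by_cases h : j = 0
      · subst h; rw [FibAux.F_zero]; simp [FibAux.G1]
      · rw [FibAux.F_mid d (by omega) (by omega)]; simp [FibAux.G1, h]
    rw [hg]
    exact ⟨j, by omega, (hDf j (by omega)).symm⟩
  have hfmem : ∀ j : ℕ, j < 2 * n → FibAux.F n d j ∈ Subgroup.closure S := by
    intro j hj
    by_cases h1 : j ≤ n - 2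
    · exact Subgroup.subset_closure ⟨j, h1, (hDf j h1).symm⟩
    by_cases h2 : j = n - 1
    · rw [h2, FibAux.F_pred d hn]; exact hP
    by_cases h3 : j = n
    · rw [h3, FibAux.F_n d hn]
      have hinv : (⟨1, -(d 0)⟩ : E1) = (D 0)⁻¹ := by rw [hD0]; ext <;> simp
      rw [hinv]
      exact Subgroup.inv_mem _ (Subgroup.subset_closure ⟨0, by omega, rfl⟩)
    by_cases h4 : j = n + 1
    · rw [h4, FibAux.F_succ d hn]
      have hmul : (⟨-1, 2 * d 0 + d 1⟩ : E1) = D 0 * (D 0 * D 1) := by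
        rw [hD0, hDi 1 le_rfl (by omega)]
        ext <;> (simp; try ring)
      rw [hmul]
      exact Subgroup.mul_mem _ (Subgroup.subset_closure ⟨0, by omega, rfl⟩)
        (Subgroup.mul_mem _ (Subgroup.subset_closure ⟨0, by omega, rfl⟩)
          (Subgroup.subset_closure ⟨1, by omega, rfl⟩))
    by_cases h5 : j ≤ 2 * n - 2
    · rw [FibAux.F_high d hn (by omega) h5]
      have h6 : 1 ≤ j - n ∧ j - n ≤ n - 2 := by omega
      rw [← hDi (j - n) h6.1 h6.2]
      exact Subgroup.subset_closure ⟨j - n, h6.2, rfl⟩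
    · have h7 : j = 2 * n - 1 := by omega
      rw [h7, FibAux.F_last d hn]; exact hP
  apply le_antisymm
  · rw [MonoidHom.range_eq_map, ← PresentedGroup.closure_range_of, MonoidHom.map_closure]
    refine (Subgroup.closure_le _).mpr ?_
    rintro _ ⟨_, ⟨x, rfl⟩, rfl⟩
    show PresentedGroup.toGroup hrel (PresentedGroup.of x) ∈ Subgroup.closure S
    rw [PresentedGroup.toGroup.of]
    show FibAux.F n d x.val ∈ Subgroup.closure S
    exact hfmem x.val (ZMod.val_lt x)
  · refine (Subgroup.closure_le _).mpr ?_
    rintro x ⟨i, hi, rfl⟩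
    exact ⟨PresentedGroup.of ((i : ZMod (2 * n))), part1 i hi⟩
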